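/- Let F = ∏_{b_i > 0} x_i^{b_i} + ∏_{b_i < 0} x_i^{-b_i} be a binomial in ℤ[x_1, …, x_m], where (b_1, …, b_m) ∈ ℤᵐ is a primitive integer vector (nonzero with gcd of entries equal to 1). Then F is irreducible in ℤ[x_1, …, x_m]. -/

import Mathlib

open MvPolynomial

private lemma binom_key {m : ℕ} (w : Fin m → ℤ) (p q : MvPolynomial (Fin m) ℤ)
    (hp : p ≠ 0) (hq : q ≠ 0) :
    ∃ u ∈ p.support, ∃ v ∈ q.support,
      (∀ a ∈ p.support, ∑ i, w i * (a i : ℤ) ≤ ∑ i, w i * (u i : ℤ)) ∧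
      (∀ c ∈ q.support, ∑ i, w i * (c i : ℤ) ≤ ∑ i, w i * (v i : ℤ)) ∧
      (u + v) ∈ (p * q).support ∧
      (∀ s ∈ (p * q).support,
        ∑ i, w i * (s i : ℤ) ≤ (∑ i, w i * (u i : ℤ)) + ∑ i, w i * (v i : ℤ)) := by
  classical
  set Lf : (Fin m →₀ ℕ) → ℤ := fun a => ∑ i, w i * (a i : ℤ) with hLf
  have hLadd : ∀ a c : Fin m →₀ ℕ, Lf (a + c) = Lf a + Lf c := by
    intro a c
    simp only [hLf, Finsupp.add_apply]
    push_cast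
    simp [mul_add, Finset.sum_add_distrib]
  set D : (Fin m →₀ ℕ) → ℤ ×ₗ Lex (Fin m →₀ ℕ) := fun a => toLex (Lf a, toLex a) with hD
  have hDle : ∀ a u : Fin m →₀ ℕ, D a ≤ D u → Lf a ≤ Lf u := by
    intro a u h
    rcases Prod.Lex.le_iff.mp h with h' | h'
    · exact h'.le
    · exact h'.1.le
  have hDeq : ∀ a c u v : Fin m →₀ ℕ, D a ≤ D u → D c ≤ D v → a + c = u + v →
      a = u ∧ c = v := by
    intro a c u v ha hc he
    have h1 : Lf a + Lf c = Lf u + Lf v := by rw [← hLadd, ← hLadd, he]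
    have h2 : Lf a = Lf u := le_antisymm (hDle _ _ ha) (by
      have := hDle _ _ hc; omega)
    have h3 : Lf c = Lf v := by omega
    have ha' : toLex a ≤ toLex u := by
      rcases Prod.Lex.le_iff.mp ha with h' | h'
      · exact absurd h2 h'.ne
      · exact h'.2
    have hc' : toLex c ≤ toLex v := by
      rcases Prod.Lex.le_iff.mp hc with h' | h'
      · exact absurd h3 h'.ne
      · exact h'.2
    have hau : a = u := by
      by_contra hne
      have hlt : toLex a < toLex u := ha'.lt_of_ne (fun h => hne (toLex.injective h))
      have : toLex (a + c) < toLex (u + v) := by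
        have := add_lt_add_of_lt_of_le hlt hc'
        exact this
      rw [he] at this
      exact lt_irrefl _ this
    subst hau
    exact ⟨rfl, add_left_cancel he⟩
  obtain ⟨u, hu, hmaxu⟩ := p.support.exists_max_image D
    (Finset.nonempty_iff_ne_empty.mpr (fun h => hp (MvPolynomial.support_eq_empty.mp h)))
  obtain ⟨v, hv, hmaxv⟩ := q.support.exists_max_image D
    (Finset.nonempty_iff_ne_empty.mpr (fun h => hq (MvPolynomial.support_eq_empty.mp h)))
  refine ⟨u, hu, v, hv, ?_, ?_, ?_, ?_⟩
  · exact fun a ha => hDle _ _ (hmaxu a ha)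
  · exact fun c hc => hDle _ _ (hmaxv c hc)
  · have hcoeff : MvPolynomial.coeff (u + v) (p * q)
        = MvPolynomial.coeff u p * MvPolynomial.coeff v q := by
      rw [MvPolynomial.coeff_mul]
      apply Finset.sum_eq_single_of_mem (u, v) (Finset.HasAntidiagonal.mem_antidiagonal.mpr rfl)
      rintro ⟨a, c⟩ hmem hne
      have he : a + c = u + v := Finset.HasAntidiagonal.mem_antidiagonal.mp hmem
      by_cases hap : a ∈ p.support
      · by_cases hcq : c ∈ q.support
        · obtain ⟨rfl, rfl⟩ := hDeq a c u v (hmaxu a hap) (hmaxv c hcq) he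
          exact absurd rfl hne
        · rw [MvPolynomial.notMem_support_iff.mp hcq, mul_zero]
      · rw [MvPolynomial.notMem_support_iff.mp hap, zero_mul]
    rw [MvPolynomial.mem_support_iff, hcoeff]
    exact mul_ne_zero (MvPolynomial.mem_support_iff.mp hu) (MvPolynomial.mem_support_iff.mp hv)
  · intro s hs
    have hs' := MvPolynomial.support_mul p q hs
    rw [Finset.mem_add] at hs'
    obtain ⟨a, ha, c, hc, rfl⟩ := hs'
    have : Lf (a + c) = Lf a + Lf c := hLadd a c
    have h1 : Lf a ≤ Lf u := hDle _ _ (hmaxu a ha)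
    have h2 : Lf c ≤ Lf v := hDle _ _ (hmaxv c hc)
    simp only [hLf] at *
    omega

private lemma binom_Ladd {m : ℕ} (w : Fin m → ℤ) (a c : Fin m →₀ ℕ) :
    (∑ i, w i * ((a + c) i : ℤ)) = (∑ i, w i * (a i : ℤ)) + ∑ i, w i * (c i : ℤ) := by
  rw [← Finset.sum_add_distrib]
  apply Finset.sum_congr rfl
  intro i _
  rw [Finsupp.add_apply]
  push_cast
  ring

private lemma binom_sumdiff {m : ℕ} (w b : Fin m → ℤ) (k : ℤ) (u1 u2 : Fin m →₀ ℕ)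
    (h : ∀ i, (u1 i : ℤ) - (u2 i : ℤ) = k * b i) :
    (∑ i, w i * (u1 i : ℤ)) - (∑ i, w i * (u2 i : ℤ)) = k * ∑ i, w i * b i := by
  rw [← Finset.sum_sub_distrib, Finset.mul_sum]
  apply Finset.sum_congr rfl
  intro i _
  rw [← mul_sub, h i]
  ring

private lemma binom_parallel {m : ℕ} (b d : Fin m → ℤ) (hb : b ≠ 0)
    (hgcd : Finset.gcd Finset.univ b = 1)
    (h : ∀ i j, b j * d i = b i * d j) : ∃ k : ℤ, ∀ i, d i = k * b i := by
  obtain ⟨i₀, hi₀⟩ := Function.ne_iff.mp hb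
  have hdvd : b i₀ ∣ d i₀ := by
    have h1 : b i₀ ∣ Finset.gcd Finset.univ (fun j => d i₀ * b j) := by
      apply Finset.dvd_gcd
      intro j _
      exact ⟨d j, by rw [← h i₀ j]; ring⟩
    rw [Finset.gcd_mul_left, hgcd, mul_one] at h1
    exact dvd_normalize_iff.mp h1
  obtain ⟨k, hk⟩ := hdvd
  refine ⟨k, fun j => ?_⟩
  have h2 : b i₀ * d j = b j * d i₀ := h j i₀
  have hbne : b i₀ ≠ 0 := fun h0 => hi₀ (by simp [h0])
  apply mul_left_cancel₀ hbne
  rw [h2, hk]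
  ring

open MvPolynomial in
/-- If `b ∈ ℤ^m` is a primitive integer vector (nonzero, gcd of entries 1), then the binomial
`∏_{b_i>0} x_i^{b_i} + ∏_{b_i<0} x_i^{-b_i}` is irreducible in `ℤ[x_1,…,x_m]`. -/
theorem stmt1 {m : ℕ} (b : Fin m → ℤ) (hb : b ≠ 0)
    (hgcd : Finset.gcd Finset.univ b = 1) :
    Irreducible ((∏ i, (X i : MvPolynomial (Fin m) ℤ) ^ (b i).toNat)
      + ∏ i, (X i : MvPolynomial (Fin m) ℤ) ^ (-(b i)).toNat) := by
  classical
  set βp : Fin m →₀ ℕ := Finsupp.equivFunOnFinite.symm (fun i => (b i).toNat) with hβpdef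
  set βm : Fin m →₀ ℕ := Finsupp.equivFunOnFinite.symm (fun i => (-(b i)).toNat) with hβmdef
  have hβpa : ∀ i, βp i = (b i).toNat := fun i => rfl
  have hβma : ∀ i, βm i = (-(b i)).toNat := fun i => rfl
  have hdiff : ∀ i, (βp i : ℤ) - (βm i : ℤ) = b i := by
    intro i; rw [hβpa, hβma]; omega
  have hprod : ∀ g : Fin m →₀ ℕ,
      (∏ i, (X i : MvPolynomial (Fin m) ℤ) ^ g i) = monomial g 1 := by
    intro g
    rw [← MvPolynomial.prod_X_pow_eq_monomial]
    exact (Finset.prod_subset (Finset.subset_univ _) (fun x _ hx => by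
      rw [Finsupp.notMem_support_iff.mp hx, pow_zero])).symm
  have h1 : (∏ i, (X i : MvPolynomial (Fin m) ℤ) ^ (b i).toNat) = monomial βp 1 := by
    rw [← hprod βp]; rfl
  have h2 : (∏ i, (X i : MvPolynomial (Fin m) ℤ) ^ (-(b i)).toNat) = monomial βm 1 := by
    rw [← hprod βm]; rfl
  rw [h1, h2]
  set F : MvPolynomial (Fin m) ℤ := monomial βp 1 + monomial βm 1 with hFdef
  have hne : βp ≠ βm := by
    intro h
    apply hb
    funext i
    have h3 := hdiff i
    rw [h] at h3
    simpa using h3.symm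
  have hFsupp : F.support = {βp, βm} := by
    ext d
    rw [MvPolynomial.mem_support_iff, hFdef, MvPolynomial.coeff_add,
      MvPolynomial.coeff_monomial, MvPolynomial.coeff_monomial,
      Finset.mem_insert, Finset.mem_singleton]
    split_ifs with hp1 hp2 hp2
    · exact absurd (hp1.trans hp2.symm) hne
    · simp [← hp1]
    · simp [← hp2]
    · constructor
      · intro h; simp at h
      · rintro (rfl | rfl)
        · exact absurd rfl hp1
        · exact absurd rfl hp2
  have hFne : F ≠ 0 := by
    intro h0
    have hmem : βp ∈ F.support := by rw [hFsupp]; exact Finset.mem_insert_self _ _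
    rw [h0] at hmem
    simp at hmem
  have hS : 0 < ∑ i, b i * b i := by
    obtain ⟨i₀, hi₀⟩ := Function.ne_iff.mp hb
    apply Finset.sum_pos' (fun i _ => mul_self_nonneg (b i))
    exact ⟨i₀, Finset.mem_univ _, mul_self_pos.mpr (by simpa using hi₀)⟩
  have hLβ : ∀ w : Fin m → ℤ,
      (∑ i, w i * (βp i : ℤ)) - (∑ i, w i * (βm i : ℤ)) = ∑ i, w i * b i := by
    intro w
    rw [← Finset.sum_sub_distrib]
    exact Finset.sum_congr rfl (fun i _ => by rw [← mul_sub, hdiff])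
  have hnegsum : ∀ (w : Fin m → ℤ) (a : Fin m →₀ ℕ),
      (∑ i, (-w) i * (a i : ℤ)) = -∑ i, w i * (a i : ℤ) := by
    intro w a
    rw [← Finset.sum_neg_distrib]
    exact Finset.sum_congr rfl (fun i _ => by simp [neg_mul])
  -- constancy of orthogonal functionals on supports of factors
  have hconst : ∀ w : Fin m → ℤ, (∑ i, w i * b i) = 0 → ∀ P Q : MvPolynomial (Fin m) ℤ,
      P * Q = F → P ≠ 0 → Q ≠ 0 → ∀ u1 ∈ P.support, ∀ u2 ∈ P.support,
      (∑ i, w i * (u1 i : ℤ)) = ∑ i, w i * (u2 i : ℤ) := by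
    intro w hw P Q hPQ hP hQ u1 hu1 u2 hu2
    obtain ⟨u, hu, v, hv, hmaxP, hmaxQ, hmem, hdom⟩ := binom_key w P Q hP hQ
    obtain ⟨u', hu', v', hv', hmaxP', hmaxQ', hmem', hdom'⟩ := binom_key (-w) P Q hP hQ
    rw [hPQ, hFsupp] at hmem hmem'
    have hMeq : (∑ i, w i * (βp i : ℤ)) = ∑ i, w i * (βm i : ℤ) := by
      have := hLβ w; omega
    have e1 : (∑ i, w i * (u i : ℤ)) + (∑ i, w i * (v i : ℤ)) = ∑ i, w i * (βp i : ℤ) := by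
      rw [← binom_Ladd w u v]
      rcases Finset.mem_insert.mp hmem with h | h
      · rw [h]
      · rw [Finset.mem_singleton.mp h, hMeq]
    have e2 : (∑ i, w i * (u' i : ℤ)) + (∑ i, w i * (v' i : ℤ)) = ∑ i, w i * (βp i : ℤ) := by
      have : (∑ i, (-w) i * (u' i : ℤ)) + (∑ i, (-w) i * (v' i : ℤ))
          = ∑ i, (-w) i * (βp i : ℤ) := by
        rw [← binom_Ladd (-w) u' v']
        rcases Finset.mem_insert.mp hmem' with h | h
        · rw [h]
        · rw [Finset.mem_singleton.mp h]
          rw [hnegsum w βm, hnegsum w βp, hMeq]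
      rw [hnegsum w u', hnegsum w v', hnegsum w βp] at this
      omega
    have m1 : (∑ i, w i * (u1 i : ℤ)) ≤ ∑ i, w i * (u i : ℤ) := hmaxP u1 hu1
    have m2 : (∑ i, w i * (u2 i : ℤ)) ≤ ∑ i, w i * (u i : ℤ) := hmaxP u2 hu2
    have m1' := hmaxP' u1 hu1
    have m2' := hmaxP' u2 hu2
    have mu := hmaxP' u hu
    have mv := hmaxQ' v hv
    rw [hnegsum w u1, hnegsum w u'] at m1'
    rw [hnegsum w u2, hnegsum w u'] at m2'
    rw [hnegsum w u, hnegsum w u'] at mu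
    rw [hnegsum w v, hnegsum w v'] at mv
    omega
  -- parallelism of support differences to b
  have hpar : ∀ P Q : MvPolynomial (Fin m) ℤ, P * Q = F → P ≠ 0 → Q ≠ 0 →
      ∀ u1 ∈ P.support, ∀ u2 ∈ P.support,
      ∃ k : ℤ, ∀ i, (u1 i : ℤ) - (u2 i : ℤ) = k * b i := by
    intro P Q hPQ hP hQ u1 hu1 u2 hu2
    apply binom_parallel b (fun i => (u1 i : ℤ) - (u2 i : ℤ)) hb hgcd
    intro i j
    set w : Fin m → ℤ := fun t => b j * (if t = i then 1 else 0) - b i * (if t = j then 1 else 0)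
      with hwdef
    have hw : (∑ t, w t * b t) = 0 := by
      simp only [hwdef, sub_mul, mul_assoc, ite_mul, one_mul, zero_mul, mul_ite, mul_zero]
      rw [Finset.sum_sub_distrib]
      rw [Finset.sum_ite_eq' Finset.univ i (fun t => b j * b t),
        Finset.sum_ite_eq' Finset.univ j (fun t => b i * b t)]
      simp [mul_comm]
    have hLw : ∀ a : Fin m →₀ ℕ, (∑ t, w t * (a t : ℤ))
        = b j * (a i : ℤ) - b i * (a j : ℤ) := by
      intro a
      simp only [hwdef, sub_mul, mul_assoc, ite_mul, one_mul, zero_mul, mul_ite, mul_zero]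
      rw [Finset.sum_sub_distrib]
      rw [Finset.sum_ite_eq' Finset.univ i (fun t => b j * (a t : ℤ)),
        Finset.sum_ite_eq' Finset.univ j (fun t => b i * (a t : ℤ))]
      simp
    have hc := hconst w hw P Q hPQ hP hQ u1 hu1 u2 hu2
    rw [hLw u1, hLw u2] at hc
    linear_combination hc
  -- a factor whose b-weight is constant on its support is a unit
  have hunit : ∀ P Q : MvPolynomial (Fin m) ℤ, P * Q = F → P ≠ 0 → Q ≠ 0 →
      (∀ u1 ∈ P.support, ∀ u2 ∈ P.support,
        (∑ i, b i * (u1 i : ℤ)) = ∑ i, b i * (u2 i : ℤ)) → IsUnit P := by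
    intro P Q hPQ hP hQ hconstP
    obtain ⟨u, hu⟩ : P.support.Nonempty :=
      Finset.nonempty_iff_ne_empty.mpr (fun h => hP (MvPolynomial.support_eq_empty.mp h))
    have hsingle : ∀ u' ∈ P.support, u' = u := by
      intro u' hu'
      obtain ⟨k, hk⟩ := hpar P Q hPQ hP hQ u' hu' u hu
      have hks := binom_sumdiff b b k u' u hk
      rw [hconstP u' hu' u hu] at hks
      have hk0 : k = 0 := by
        rcases mul_eq_zero.mp (by omega : k * (∑ i, b i * b i) = 0) with h | h
        · exact h
        · omega
      apply Finsupp.ext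
      intro i
      have := hk i
      rw [hk0, zero_mul] at this
      omega
    have hsuppP : P.support = {u} :=
      Finset.eq_singleton_iff_unique_mem.mpr ⟨hu, hsingle⟩
    have hdecomp : ∀ β : Fin m →₀ ℕ, β ∈ F.support → ∀ i, u i ≤ β i := by
      intro β hβ i
      have hβ' : β ∈ (P * Q).support := by rw [hPQ]; exact hβ
      obtain ⟨a, ha, c, hc, hac⟩ := Finset.mem_add.mp (MvPolynomial.support_mul P Q hβ')
      rw [hsingle a ha] at hac
      have := DFunLike.congr_fun hac i
      rw [Finsupp.add_apply] at this
      omega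
    have hβpm : βp ∈ F.support := by rw [hFsupp]; exact Finset.mem_insert_self _ _
    have hβmm : βm ∈ F.support := by
      rw [hFsupp]; exact Finset.mem_insert_of_mem (Finset.mem_singleton_self _)
    have hu0 : u = 0 := by
      apply Finsupp.ext
      intro i
      have h1 := hdecomp βp hβpm i
      have h2 := hdecomp βm hβmm i
      rw [hβpa] at h1
      rw [hβma] at h2
      rw [Finsupp.zero_apply]
      omega
    have hPC : P = C (MvPolynomial.coeff 0 P) := by
      conv_lhs => rw [MvPolynomial.as_sum P, hsuppP, hu0, Finset.sum_singleton]
      rw [MvPolynomial.C_apply]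
    have hco : MvPolynomial.coeff βp F = 1 := by
      rw [hFdef, MvPolynomial.coeff_add, MvPolynomial.coeff_monomial,
        MvPolynomial.coeff_monomial, if_pos rfl, if_neg (fun h => hne h.symm), add_zero]
    have hmul : MvPolynomial.coeff 0 P * MvPolynomial.coeff βp Q = 1 := by
      rw [← MvPolynomial.coeff_C_mul, ← hPC, hPQ, hco]
    rw [hPC]
    exact (IsUnit.of_mul_eq_one _ hmul).map MvPolynomial.C
  constructor
  · -- F is not a unit
    intro hFunit
    obtain ⟨G, hG⟩ := isUnit_iff_exists_inv.mp hFunit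
    have hG0 : G ≠ 0 := by rintro rfl; rw [mul_zero] at hG; exact one_ne_zero hG.symm
    obtain ⟨u, hu, v, hv, hmaxF, -, hmem, -⟩ := binom_key b F G hFne hG0
    obtain ⟨u', hu', v', hv', hmaxF', -, hmem', -⟩ := binom_key (-b) F G hFne hG0
    have h00 : ∀ x y : Fin m →₀ ℕ, x + y ∈ (F * G).support → x = 0 := by
      intro x y hxy
      rw [hG] at hxy
      have h := MvPolynomial.mem_support_iff.mp hxy
      rw [MvPolynomial.coeff_one] at h
      have hxy0 : x + y = 0 := by
        by_contra hne'
        exact h (if_neg (fun h' => hne' h'.symm))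
      apply Finsupp.ext
      intro i
      have := DFunLike.congr_fun hxy0 i
      rw [Finsupp.add_apply, Finsupp.zero_apply] at this
      rw [Finsupp.zero_apply]
      omega
    have hu0 := h00 u v hmem
    have hu'0 := h00 u' v' hmem'
    have hβpm : βp ∈ F.support := by rw [hFsupp]; exact Finset.mem_insert_self _ _
    have hβmm : βm ∈ F.support := by
      rw [hFsupp]; exact Finset.mem_insert_of_mem (Finset.mem_singleton_self _)
    have hz : ∀ w : Fin m → ℤ, (∑ i, w i * ((0 : Fin m →₀ ℕ) i : ℤ)) = 0 := by
      intro w; simp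
    have c1 := hmaxF βp hβpm
    have c2 := hmaxF' βm hβmm
    rw [hu0, hz b] at c1
    rw [hu'0, hz (-b), hnegsum b βm] at c2
    have := hLβ b
    omega
  · -- any factorization has a unit factor
    intro P Q hF'
    have hPQ : P * Q = F := hF'.symm
    have hP : P ≠ 0 := by rintro rfl; rw [zero_mul] at hPQ; exact hFne hPQ.symm
    have hQ : Q ≠ 0 := by rintro rfl; rw [mul_zero] at hPQ; exact hFne hPQ.symm
    obtain ⟨u, hu, v, hv, hmaxP, hmaxQ, hmem, hdom⟩ := binom_key b P Q hP hQ
    obtain ⟨u', hu', v', hv', hmaxP', hmaxQ', hmem', hdom'⟩ := binom_key (-b) P Q hP hQ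
    rw [hPQ, hFsupp] at hmem hmem' hdom hdom'
    have hβS := hLβ b
    have h1 : u + v = βp := by
      rcases Finset.mem_insert.mp hmem with h | h
      · exact h
      · exfalso
        have hd := hdom βp (Finset.mem_insert_self _ _)
        have hadd := binom_Ladd b u v
        have hL : (∑ i, b i * ((u + v) i : ℤ)) = ∑ i, b i * (βm i : ℤ) := by
          rw [Finset.mem_singleton.mp h]
        omega
    have h2 : u' + v' = βm := by
      rcases Finset.mem_insert.mp hmem' with h | h
      · exfalso
        have hd := hdom' βm (Finset.mem_insert_of_mem (Finset.mem_singleton_self _))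
        have hadd := binom_Ladd b u' v'
        have hL : (∑ i, b i * ((u' + v') i : ℤ)) = ∑ i, b i * (βp i : ℤ) := by rw [h]
        rw [hnegsum b βm, hnegsum b u', hnegsum b v'] at hd
        have hadd' := binom_Ladd (-b) u' v'
        rw [hnegsum b (u' + v'), hnegsum b u', hnegsum b v'] at hadd'
        omega
      · exact Finset.mem_singleton.mp h
    obtain ⟨kP, hkP⟩ := hpar P Q hPQ hP hQ u hu u' hu'
    obtain ⟨kQ, hkQ⟩ := hpar Q P (by rw [mul_comm]; exact hPQ) hQ hP v hv v' hv'
    have eP := binom_sumdiff b b kP u u' hkP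
    have eQ := binom_sumdiff b b kQ v v' hkQ
    have hvalp : (∑ i, b i * (u i : ℤ)) + (∑ i, b i * (v i : ℤ))
        = ∑ i, b i * (βp i : ℤ) := by rw [← binom_Ladd, h1]
    have hvalm : (∑ i, b i * (u' i : ℤ)) + (∑ i, b i * (v' i : ℤ))
        = ∑ i, b i * (βm i : ℤ) := by rw [← binom_Ladd, h2]
    have hPge : (∑ i, b i * (u' i : ℤ)) ≤ ∑ i, b i * (u i : ℤ) := hmaxP u' hu'
    have hQge : (∑ i, b i * (v' i : ℤ)) ≤ ∑ i, b i * (v i : ℤ) := hmaxQ v' hv'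
    have hkP0 : 0 ≤ kP := by nlinarith
    have hkQ0 : 0 ≤ kQ := by nlinarith
    have hsum : kP * (∑ i, b i * b i) + kQ * (∑ i, b i * b i) = ∑ i, b i * b i := by omega
    have hk1 : kP + kQ = 1 := by
      have h' : (kP + kQ) * (∑ i, b i * b i) = 1 * (∑ i, b i * b i) := by
        rw [add_mul, one_mul]; omega
      exact mul_right_cancel₀ (ne_of_gt hS) h'
    rcases (by omega : kP = 0 ∨ kQ = 0) with hk | hk
    · left
      apply hunit P Q hPQ hP hQ
      intro u1 hu1 u2 hu2
      have a1 := hmaxP u1 hu1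
      have a2 := hmaxP u2 hu2
      have b1 := hmaxP' u1 hu1
      have b2 := hmaxP' u2 hu2
      rw [hnegsum b u1, hnegsum b u'] at b1
      rw [hnegsum b u2, hnegsum b u'] at b2
      rw [hk, zero_mul] at eP
      omega
    · right
      apply hunit Q P (by rw [mul_comm]; exact hPQ) hQ hP
      intro u1 hu1 u2 hu2
      have a1 := hmaxQ u1 hu1
      have a2 := hmaxQ u2 hu2
      have b1 := hmaxQ' u1 hu1
      have b2 := hmaxQ' u2 hu2
      rw [hnegsum b u1, hnegsum b v'] at b1
      rw [hnegsum b u2, hnegsum b v'] at b2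
      rw [hk, zero_mul] at eQ
      omega
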